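/- Collection squares compose with covering squares: given a commuting diagram of two squares F → D → B over E → C → A where both squares are covering squares (the horizontal maps on the bottom are surjections and the induced maps to the pullbacks are surjections), if either of the two inner squares is a collection square then the outer square (F → B over E → A) is a collection square. -/
import Mathlib


/-- A covering square (right edge `f`, bottom `p`, left `g`, top `q`):
the square commutes, `p` is a surjection and the induced map `D → B ×_A C`
is a surjection. -/
def IsCoveringSq {A B C D : Type} (f : B → A) (p : C → A) (g : D → C) (q : D → B) : Prop :=
  (∀ d, f (q d) = p (g d)) ∧ Function.Surjective p ∧
  (∀ (b : B) (c : C), f b = p c → ∃ d, q d = b ∧ g d = c)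

/-- The additional collection condition of a collection square. -/
def CollCond {A B C D : Type} (f : B → A) (p : C → A) (g : D → C) (q : D → B) : Prop :=
  ∀ (a : A) (E : Type) (e : E → {b : B // f b = a}), Function.Surjective e →
    ∃ c : C, p c = a ∧ ∃ h : {d : D // g d = c} → E,
      ∀ d : {d : D // g d = c}, ((e (h d)) : {b : B // f b = a}).1 = q d.1

/-- given two horizontally composable covering squares
`F → D → B` over `E → C → A`, if either inner square is a collection square
then the outer square is a collection square. -/
theorem stmt_6 {A B C D E F : Type}
    (f : B → A) (ρ : C → A) (g : D → C) (σ : D → B)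
    (α : E → C) (m : F → E) (β : F → D)
    (h1 : IsCoveringSq g α m β) (h2 : IsCoveringSq f ρ g σ)
    (h3 : CollCond g α m β ∨ CollCond f ρ g σ) :
    IsCoveringSq f (fun x => ρ (α x)) m (fun x => σ (β x)) ∧
    CollCond f (fun x => ρ (α x)) m (fun x => σ (β x)) := by
  obtain ⟨c1, s1, pb1⟩ := h1
  obtain ⟨c2, s2, pb2⟩ := h2
  constructor
  · refine ⟨fun x => by rw [c2, c1], fun a => ?_, fun b ce hbe => ?_⟩
    · obtain ⟨c, hc⟩ := s2 a
      obtain ⟨x, hx⟩ := s1 c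
      exact ⟨x, show ρ (α x) = a by rw [hx, hc]⟩
    · obtain ⟨d, hd1, hd2⟩ := pb2 b (α ce) hbe
      obtain ⟨x, hx1, hx2⟩ := pb1 d ce hd2
      exact ⟨x, show σ (β x) = b by rw [hx1, hd1], hx2⟩
  · rcases h3 with hc | hc
    · -- left inner square is a collection square
      intro a E' e he
      obtain ⟨c₀, hc₀⟩ := s2 a
      -- build pullback of e and σ over the fiber
      set E'' := {p : E' × {d : D // g d = c₀} // ((e p.1) : {b : B // f b = a}).1 = σ p.2.1}
        with hE''
      have hsurj : Function.Surjective
          (fun p : E'' => p.1.2 : E'' → {d : D // g d = c₀}) := by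
        rintro ⟨d, hd⟩
        have hf : f (σ d) = a := by rw [c2, hd, hc₀]
        obtain ⟨x, hx⟩ := he ⟨σ d, hf⟩
        exact ⟨⟨(x, ⟨d, hd⟩), by rw [hx]⟩, rfl⟩
      obtain ⟨c, hcα, h, hh⟩ := hc c₀ E'' _ hsurj
      refine ⟨c, show ρ (α c) = a by rw [hcα, hc₀], fun x => (h x).1.1, fun x => ?_⟩
      have h1' := (h x).2
      have h2' := hh x
      simp only at h1' h2' ⊢
      rw [h1', h2']
    · -- right inner square is a collection square
      intro a E' e he
      obtain ⟨c₀, hc₀, h₀, hh₀⟩ := hc a E' e he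
      obtain ⟨c, hcα⟩ := s1 c₀
      refine ⟨c, show ρ (α c) = a by rw [hcα, hc₀], fun x => h₀ ⟨β x.1, by rw [c1, x.2, hcα]⟩, fun x => ?_⟩
      exact hh₀ ⟨β x.1, by rw [c1, x.2, hcα]⟩
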